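/- arXiv:1011.0620 — 4 statements merged into one kernel-verified Lean document; each statement's English description precedes it below -/
import Mathlib

section
/- Let G be a finite simple graph and let e be an edge of G. Then any cycle of minimum length among all cycles of G containing e is an isometric subgraph of G; that is, for every two vertices x, y on such a shortest cycle C through e, the distance between x and y along C equals their distance in G. -/
open SimpleGraph

namespace ShortestCycleAux

open SimpleGraph.Walk

variable {V : Type*} {G : SimpleGraph V}

/-- In a path starting at `a`, any edge containing `a` must be the first edge. -/
lemma path_first_edge {a b c : V} (S : G.Walk a c) (hS : S.IsPath)
    (hb : s(a, b) ∈ S.edges) :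
    ∃ (h : G.Adj a b) (S' : G.Walk b c), S = Walk.cons h S' := by
  cases S with
  | nil => simp at hb
  | @cons _ d _ h' S'' =>
    rw [edges_cons, List.mem_cons] at hb
    rcases hb with hb | hb
    · have hbd : b = d := Sym2.congr_right.mp hb
      subst hbd
      exact ⟨h', S'', rfl⟩
    · exfalso
      have ha : a ∈ S''.support := Walk.fst_mem_support_of_mem_edges _ hb
      rw [cons_isPath_iff] at hS
      exact hS.2 ha

lemma end_mem_tail_support {u : V} (p : G.Walk u u) (hp : p ≠ Walk.nil) :
    u ∈ p.support.tail := by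
  cases p with
  | nil => exact absurd rfl hp
  | cons h q => rw [support_cons, List.tail_cons]; exact q.end_mem_support

/-- Split a cycle through `s(a,b)` based at `a` into the edge `s(a,b)` and a walk
from `b` to `a` avoiding that edge. -/
lemma cycle_split {a b : V} (D : G.Walk a a) (hD : D.IsCycle) (he : s(a, b) ∈ D.edges) :
    ∃ R : G.Walk b a, s(a, b) ∉ R.edges ∧ R.length + 1 = D.length ∧
      (∀ f ∈ R.edges, f ∈ D.edges) ∧ (∀ v ∈ D.support, v ∈ R.support) := by
  cases D with
  | nil => simp at he
  | @cons _ c _ h' T =>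
    obtain ⟨hT, hac⟩ := (cons_isCycle_iff T h').mp hD
    rw [edges_cons, List.mem_cons] at he
    by_cases hbc : b = c
    · subst hbc
      refine ⟨T, hac, by simp, fun f hf => by simp [hf], ?_⟩
      intro v hv
      rw [support_cons, List.mem_cons] at hv
      rcases hv with rfl | hv
      · exact T.end_mem_support
      · exact hv
    · have hb : s(a, b) ∈ T.edges := by
        rcases he with he | he
        · exact absurd (Sym2.congr_right.mp he) hbc
        · exact he
      have hrev : s(a, b) ∈ T.reverse.edges := by
        rw [edges_reverse, List.mem_reverse]; exact hb
      obtain ⟨hab, S', hTrev⟩ := path_first_edge T.reverse hT.reverse hrev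
      have haS' : a ∉ S'.support := by
        have h1 := hT.reverse
        rw [hTrev, cons_isPath_iff] at h1
        exact h1.2
      have hS'len : T.length = S'.length + 1 := by
        have := congrArg Walk.length hTrev
        rw [length_reverse, length_cons] at this
        exact this
      have hS'sub : ∀ f ∈ S'.edges, f ∈ T.edges := by
        intro f hf
        have : f ∈ T.reverse.edges := by rw [hTrev, edges_cons]; exact List.mem_cons_of_mem _ hf
        rwa [edges_reverse, List.mem_reverse] at this
      refine ⟨S'.append (Walk.cons h'.symm Walk.nil), ?_, ?_, ?_, ?_⟩
      · intro hf
        rw [edges_append, List.mem_append] at hf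
        rcases hf with hf | hf
        · exact haS' (Walk.fst_mem_support_of_mem_edges _ hf)
        · simp only [edges_cons, edges_nil, List.mem_singleton] at hf
          have : b = c := by
            rw [Sym2.eq_swap] at hf
            exact Sym2.congr_left.mp hf
          exact hbc this
      · rw [length_append, length_cons, length_nil, length_cons, hS'len]
      · intro f hf
        rw [edges_append, List.mem_append] at hf
        rcases hf with hf | hf
        · rw [edges_cons]
          exact List.mem_cons_of_mem _ (hS'sub f hf)
        · simp only [edges_cons, edges_nil, List.mem_singleton] at hf
          rw [edges_cons, hf, Sym2.eq_swap]
          exact List.mem_cons_self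
      · intro v hv
        rw [support_cons, List.mem_cons] at hv
        rw [mem_support_append_iff]
        rcases hv with rfl | hv
        · right; exact Walk.end_mem_support _
        · have : v ∈ T.reverse.support := by rw [support_reverse, List.mem_reverse]; exact hv
          rw [hTrev, support_cons, List.mem_cons] at this
          rcases this with rfl | hv'
          · right; exact Walk.end_mem_support _
          · left; exact hv'

lemma mem_dropUntil_or [DecidableEq V] {b a : V} (W : G.Walk b a) :
    ∀ x (hx : x ∈ W.support) y (hy : y ∈ W.support),
      y ∈ (W.dropUntil x hx).support ∨ x ∈ (W.dropUntil y hy).support := by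
  induction W with
  | nil =>
    intro x hx y hy
    have hx' := mem_support_nil_iff.mp hx
    have hy' := mem_support_nil_iff.mp hy
    subst hx'; subst hy'
    left
    exact Walk.start_mem_support _
  | @cons w c _ h p ih =>
    intro x hx y hy
    by_cases hxw : w = x
    · subst hxw
      left
      have : (Walk.cons h p).dropUntil w hx = Walk.cons h p := by
        simp [Walk.dropUntil]
      rw [this]
      exact hy
    · by_cases hyw : w = y
      · subst hyw
        right
        have : (Walk.cons h p).dropUntil w hy = Walk.cons h p := by
          simp [Walk.dropUntil]
        rw [this]
        exact hx
      · have hx' : x ∈ p.support := by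
          have h1 := hx
          rw [support_cons, List.mem_cons] at h1
          rcases h1 with h1 | h1
          · exact absurd h1.symm hxw
          · exact h1
        have hy' : y ∈ p.support := by
          have h1 := hy
          rw [support_cons, List.mem_cons] at h1
          rcases h1 with h1 | h1
          · exact absurd h1.symm hyw
          · exact h1
        have hdx : (Walk.cons h p).dropUntil x hx = p.dropUntil x hx' := by
          simp [Walk.dropUntil, hxw]
        have hdy : (Walk.cons h p).dropUntil y hy = p.dropUntil y hy' := by
          simp [Walk.dropUntil, hyw]
        rw [hdx, hdy]
        exact ih x hx' y hy'

lemma split_at_edge {a b x y : V} (P : G.Walk x y) (he : s(a, b) ∈ P.edges) :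
    (∃ (q : G.Walk x a) (r : G.Walk b y), q.length + 1 + r.length = P.length) ∨
    (∃ (q : G.Walk x b) (r : G.Walk a y), q.length + 1 + r.length = P.length) := by
  induction P with
  | nil => simp at he
  | @cons u w _ h p ih =>
    rw [edges_cons, List.mem_cons] at he
    rcases he with he | he
    · rw [Sym2.eq_iff] at he
      rcases he with ⟨rfl, rfl⟩ | ⟨rfl, rfl⟩
      · exact Or.inl ⟨Walk.nil, p, by simp only [length_nil, length_cons]; omega⟩
      · exact Or.inr ⟨Walk.nil, p, by simp only [length_nil, length_cons]; omega⟩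
    · rcases ih he with ⟨q, r, hl⟩ | ⟨q, r, hl⟩
      · exact Or.inl ⟨Walk.cons h q, r, by rw [length_cons, length_cons]; omega⟩
      · exact Or.inr ⟨Walk.cons h q, r, by rw [length_cons, length_cons]; omega⟩

lemma segment_bound [DecidableEq V] {H : SimpleGraph V} {a b x y : V} (R : G.Walk b a)
    (hx : x ∈ R.support) (hy : y ∈ (R.dropUntil x hx).support)
    (P : G.Walk x y) (hRe : s(a, b) ∉ R.edges) (hPe : s(a, b) ∉ P.edges)
    (hmin' : ∀ Q : G.Walk b a, Q.IsPath → s(a, b) ∉ Q.edges → R.length ≤ Q.length)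
    (hRH : ∀ f ∈ R.edges, f ∈ H.edgeSet) :
    H.dist x y ≤ P.length := by
  set RD := R.dropUntil x hx with hRD
  have hsplitR := congrArg Walk.length (R.take_spec hx)
  rw [length_append, ← hRD] at hsplitR
  have hsplitRD := congrArg Walk.length (RD.take_spec hy)
  rw [length_append] at hsplitRD
  have hRDsub : ∀ f ∈ RD.edges, f ∈ R.edges := R.edges_dropUntil_subset hx
  have hR3sub : ∀ f ∈ (RD.dropUntil y hy).edges, f ∈ R.edges := fun f hf =>
    hRDsub f (RD.edges_dropUntil_subset hy hf)
  have hWe : s(a, b) ∉ ((R.takeUntil x hx).append (P.append (RD.dropUntil y hy))).edges := by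
    intro hf
    rw [edges_append, List.mem_append, edges_append, List.mem_append] at hf
    rcases hf with hf | hf | hf
    · exact hRe (R.edges_takeUntil_subset hx hf)
    · exact hPe hf
    · exact hRe (hR3sub _ hf)
  set W := (R.takeUntil x hx).append (P.append (RD.dropUntil y hy)) with hW
  have hQ := hmin' W.bypass W.bypass_isPath (fun hf => hWe (W.edges_bypass_subset hf))
  have hWlen : W.length = (R.takeUntil x hx).length + (P.length + (RD.dropUntil y hy).length) := by
    rw [hW, length_append, length_append]
  have hbp := W.length_bypass_le
  have hle : (RD.takeUntil y hy).length ≤ P.length := by omega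
  have h2H : ∀ f ∈ (RD.takeUntil y hy).edges, f ∈ H.edgeSet := fun f hf =>
    hRH f (hRDsub f (RD.edges_takeUntil_subset hy hf))
  calc H.dist x y ≤ ((RD.takeUntil y hy).transfer H h2H).length := dist_le _
    _ = (RD.takeUntil y hy).length := length_transfer _ _
    _ ≤ P.length := hle

end ShortestCycleAux

open ShortestCycleAux in
/-- In a finite simple graph `G`, any shortest cycle `C` among all cycles
containing a given edge `e` is isometric: for every two vertices `x, y` on `C`, the distance
between `x` and `y` along `C` (i.e. in the subgraph formed by the edges of `C`) equals their
distance in `G`. -/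
theorem shortest_cycle_through_edge_isometric {V : Type*} [Fintype V]
    (G : SimpleGraph V) (e : Sym2 V) (u : V) (C : G.Walk u u)
    (hC : C.IsCycle) (heC : e ∈ C.edges)
    (hmin : ∀ (w : V) (C' : G.Walk w w), C'.IsCycle → e ∈ C'.edges →
      C.length ≤ C'.length) :
    ∀ x ∈ C.support, ∀ y ∈ C.support,
      (SimpleGraph.fromEdgeSet {e' | e' ∈ C.edges}).dist x y = G.dist x y := by
  classical
  open SimpleGraph.Walk in
  revert heC hmin
  induction e using Sym2.ind with
  | _ a b =>
  intro heC hmin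
  set H := SimpleGraph.fromEdgeSet {e' | e' ∈ C.edges} with hH
  have hab : G.Adj a b := C.adj_of_mem_edges heC
  have ha : a ∈ C.support := Walk.fst_mem_support_of_mem_edges C heC
  have hb : b ∈ C.support := Walk.snd_mem_support_of_mem_edges C heC
  have hCH : ∀ f ∈ C.edges, f ∈ H.edgeSet := by
    intro f hf
    rw [hH, edgeSet_fromEdgeSet]
    exact ⟨hf, SimpleGraph.not_isDiag_of_mem_edgeSet G (C.edges_subset_edgeSet hf)⟩
  have hHle : H ≤ G := by
    intro v w hvw
    rw [hH, fromEdgeSet_adj] at hvw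
    exact C.adj_of_mem_edges hvw.1
  have hreachH : ∀ x ∈ C.support, ∀ y ∈ C.support, H.Reachable x y := by
    intro x hx y hy
    rw [← Walk.support_transfer _ hCH] at hx hy
    exact ((C.transfer H hCH).takeUntil x hx).reverse.reachable.trans
      ((C.transfer H hCH).takeUntil y hy).reachable
  -- rotate the cycle at `a` and split off the edge
  have hD : (C.rotate a ha).IsCycle := hC.rotate ha
  have heD : s(a, b) ∈ (C.rotate a ha).edges := ((C.rotate_edges a ha).mem_iff).mpr heC
  obtain ⟨R, hRe, hRlen, hRsubD, hRsuppD⟩ := cycle_split (C.rotate a ha) hD heD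
  have hDlen : (C.rotate a ha).length = C.length := by
    have := (C.rotate_edges a ha).perm.length_eq
    rwa [Walk.length_edges, Walk.length_edges] at this
  have hRsub : ∀ f ∈ R.edges, f ∈ C.edges := fun f hf =>
    ((C.rotate_edges a ha).mem_iff).mp (hRsubD f hf)
  have hCsuppD : ∀ v ∈ C.support, v ∈ (C.rotate a ha).support := by
    intro v hv
    rw [Walk.mem_support_iff] at hv
    rcases hv with rfl | hv
    · have hu : v ∈ C.support.tail := end_mem_tail_support C hC.ne_nil
      exact List.mem_of_mem_tail (((Walk.support_rotate C a ha).mem_iff).mpr hu)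
    · exact List.mem_of_mem_tail (((Walk.support_rotate C a ha).mem_iff).mpr hv)
  have hRsupp : ∀ v ∈ C.support, v ∈ R.support := fun v hv => hRsuppD v (hCsuppD v hv)
  have hmin' : ∀ Q : G.Walk b a, Q.IsPath → s(a, b) ∉ Q.edges → R.length ≤ Q.length := by
    intro Q hQp hQe
    have hK : (Walk.cons hab Q).IsCycle := (Walk.cons_isCycle_iff Q hab).mpr ⟨hQp, hQe⟩
    have := hmin a (Walk.cons hab Q) hK (by rw [Walk.edges_cons]; exact List.mem_cons_self)
    rw [Walk.length_cons] at this
    omega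
  have hRH : ∀ f ∈ R.edges, f ∈ H.edgeSet := fun f hf => hCH f (hRsub f hf)
  have key : ∀ n x y, x ∈ C.support → y ∈ C.support → G.dist x y = n → H.dist x y ≤ n := by
    intro n
    induction n using Nat.strong_induction_on with
    | _ n ih =>
    intro x y hx hy hdist
    have hreachxy : G.Reachable x y := (hreachH x hx y hy).mono hHle
    obtain ⟨P, hPlen⟩ := hreachxy.exists_walk_length_eq_dist
    rw [hdist] at hPlen
    by_cases hPe : s(a, b) ∈ P.edges
    · have habH : H.Adj a b := by
        rw [hH, fromEdgeSet_adj]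
        exact ⟨heC, hab.ne⟩
      rcases split_at_edge P hPe with ⟨q, r, hl⟩ | ⟨q, r, hl⟩
      · have hq : G.dist x a ≤ q.length := dist_le q
        have hr : G.dist b y ≤ r.length := dist_le r
        have h1 : H.dist x a ≤ G.dist x a := ih _ (by omega) x a hx ha rfl
        have h2 : H.dist b y ≤ G.dist b y := ih _ (by omega) b y hb hy rfl
        obtain ⟨w1, hw1⟩ := (hreachH x hx a ha).exists_walk_length_eq_dist
        obtain ⟨w2, hw2⟩ := (hreachH b hb y hy).exists_walk_length_eq_dist
        have hd := dist_le (w1.append (Walk.cons habH w2))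
        rw [Walk.length_append, Walk.length_cons] at hd
        omega
      · have hq : G.dist x b ≤ q.length := dist_le q
        have hr : G.dist a y ≤ r.length := dist_le r
        have h1 : H.dist x b ≤ G.dist x b := ih _ (by omega) x b hx hb rfl
        have h2 : H.dist a y ≤ G.dist a y := ih _ (by omega) a y ha hy rfl
        obtain ⟨w1, hw1⟩ := (hreachH x hx b hb).exists_walk_length_eq_dist
        obtain ⟨w2, hw2⟩ := (hreachH a ha y hy).exists_walk_length_eq_dist
        have hd := dist_le (w1.append (Walk.cons habH.symm w2))
        rw [Walk.length_append, Walk.length_cons] at hd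
        omega
    · have hx' : x ∈ R.support := hRsupp x hx
      have hy' : y ∈ R.support := hRsupp y hy
      rcases mem_dropUntil_or R x hx' y hy' with hcase | hcase
      · have := segment_bound R hx' hcase P hRe hPe hmin' hRH
        omega
      · have hPe2 : s(a, b) ∉ P.reverse.edges := by
          rw [Walk.edges_reverse, List.mem_reverse]; exact hPe
        have hseg := segment_bound R hy' hcase P.reverse hRe hPe2 hmin' hRH
        rw [Walk.length_reverse] at hseg
        rw [SimpleGraph.dist_comm]
        omega
  intro x hx y hy
  refine le_antisymm (key (G.dist x y) x y hx hy rfl) ?_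
  obtain ⟨p, hp⟩ := (hreachH x hx y hy).exists_walk_length_eq_dist
  have hsub : ∀ f ∈ p.edges, f ∈ G.edgeSet := fun f hf =>
    SimpleGraph.edgeSet_mono hHle (p.edges_subset_edgeSet hf)
  have := dist_le (p.transfer G hsub)
  rwa [Walk.length_transfer, hp] at this
end

section
/- Let G be a finite simple graph, let D be a proper subset of its vertex set, and let P = (x_0, x_1, ..., x_p) be an acceptable D-ear in G. Then for every vertex x on P, the distance from x to D in G equals the distance from x to D measured along P, i.e. d_G(x, D) = d_P(x, D). -/
open SimpleGraph

variable {V : Type*}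

/-- A `D`-ear: a path `P = (x₀, x₁, …, x_p)` in `G` meeting `D` exactly in its two
endpoints (`P` may be closed, in which case `x₀ = x_p`). -/
def IsDEar (G : SimpleGraph V) (D : Set V) {a b : V} (P : G.Walk a b) : Prop :=
  a ∈ D ∧ b ∈ D ∧ 0 < P.length ∧ P.support.tail.Nodup ∧
    ∀ x ∈ P.support.tail.dropLast, x ∉ D

section Helpers
open List
variable {G : SimpleGraph V}

namespace SimpleGraph.Walk

@[simp] lemma length_take {u v : V} (p : G.Walk u v) (n : ℕ) :
    (p.take n).length = min n p.length := by
  induction p generalizing n with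
  | nil => cases n <;> simp [take]
  | cons h q ih =>
    cases n with
    | zero => simp [take]
    | succ m => simp [take, ih, Nat.succ_min_succ]

lemma getVert_take {u v : V} (p : G.Walk u v) (n m : ℕ) :
    (p.take n).getVert m = p.getVert (min m n) := by
  induction p generalizing n m with
  | nil => cases n <;> simp [take, getVert_of_length_le]
  | cons h q ih =>
    cases n with
    | zero => simp [take, getVert_of_length_le]
    | succ k =>
      cases m with
      | zero => simp [take]
      | succ l => simp [take, getVert_cons_succ, ih, Nat.succ_min_succ]

@[simp] lemma length_drop {u v : V} (p : G.Walk u v) (n : ℕ) :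
    (p.drop n).length = p.length - n := by
  induction p generalizing n with
  | nil => cases n <;> simp [drop]
  | cons h q ih =>
    cases n with
    | zero => simp [drop]
    | succ m => simpa [drop] using ih m

lemma getVert_drop {u v : V} (p : G.Walk u v) (n m : ℕ) :
    (p.drop n).getVert m = p.getVert (n + m) := by
  induction p generalizing n m with
  | nil => cases n <;> simp [drop, getVert_of_length_le]
  | cons h q ih =>
    cases n with
    | zero => simp [drop]
    | succ k =>
      rw [show k + 1 + m = (k + m) + 1 by omega]
      simpa [drop, getVert_cons_succ] using ih k m

lemma support_eq_map_range {u v : V} (p : G.Walk u v) :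
    p.support = (List.range (p.length + 1)).map p.getVert := by
  induction p with
  | nil => simp [getVert]
  | cons h q ih =>
    rw [support_cons, ih]
    show _ = (List.range (q.length + 1 + 1)).map (Walk.cons h q).getVert
    conv_rhs => rw [List.range_succ_eq_map, List.map_cons, List.map_map]
    rfl

lemma firstEdge_mem {u v : V} (p : G.Walk u v) (hp : 0 < p.length) :
    s(u, p.getVert 1) ∈ p.edges := by
  cases p with
  | nil => simp at hp
  | cons h q => simp [getVert_cons_succ]

lemma getVert_transfer {u v : V} (p : G.Walk u v) {H : SimpleGraph V}
    (hp : ∀ e ∈ p.edges, e ∈ H.edgeSet) (n : ℕ) :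
    (p.transfer H hp).getVert n = p.getVert n := by
  induction p generalizing n with
  | nil => cases n <;> rfl
  | cons h q ih =>
    cases n with
    | zero => simp
    | succ m => exact ih _ m

end SimpleGraph.Walk

lemma nodup_map_range_iff {α : Type*} (f : ℕ → α) (n : ℕ) :
    ((List.range n).map f).Nodup ↔ ∀ i j, i < j → j < n → f i ≠ f j := by
  rw [List.Nodup, List.pairwise_map, List.pairwise_iff_get]
  constructor
  · intro h i j hij hjn
    simpa using h ⟨i, by simpa using (hij.trans hjn)⟩ ⟨j, by simpa using hjn⟩ (by simpa using hij)
  · intro h i j hij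
    have := h i j (by simpa using hij) (by simpa using j.2)
    simpa using this

namespace SimpleGraph.Walk

lemma tail_support_eq_map {u v : V} (p : G.Walk u v) :
    p.support.tail = (List.range p.length).map (fun i => p.getVert (i + 1)) := by
  rw [support_eq_map_range, List.range_succ_eq_map, List.map_cons, List.tail_cons, List.map_map]
  rfl

lemma dropLast_tail_support_eq_map {u v : V} (p : G.Walk u v) (h : 0 < p.length) :
    p.support.tail.dropLast = (List.range (p.length - 1)).map (fun i => p.getVert (i + 1)) := by
  rw [tail_support_eq_map]
  obtain ⟨m, hm⟩ : ∃ m, p.length = m + 1 := ⟨p.length - 1, by omega⟩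
  rw [hm, List.range_succ, List.map_append, List.map_singleton, List.dropLast_concat]
  simp

end SimpleGraph.Walk

lemma isDEar_iff (G : SimpleGraph V) (D : Set V) {a b : V} (P : G.Walk a b) :
    IsDEar G D P ↔ a ∈ D ∧ b ∈ D ∧ 0 < P.length ∧
      (∀ s t, 1 ≤ s → s < t → t ≤ P.length → P.getVert s ≠ P.getVert t) ∧
      (∀ s, 1 ≤ s → s ≤ P.length - 1 → P.getVert s ∉ D) := by
  constructor
  · rintro ⟨ha, hb, hlen, hnd, hint⟩
    refine ⟨ha, hb, hlen, ?_, ?_⟩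
    · intro s t hs hst htl
      rw [Walk.tail_support_eq_map, nodup_map_range_iff] at hnd
      have := hnd (s - 1) (t - 1) (by omega) (by omega)
      rw [show s - 1 + 1 = s by omega, show t - 1 + 1 = t by omega] at this
      exact this
    · intro s hs hsl
      apply hint
      rw [P.dropLast_tail_support_eq_map hlen]
      refine List.mem_map.2 ⟨s - 1, List.mem_range.2 (by omega), ?_⟩
      rw [show s - 1 + 1 = s by omega]
  · rintro ⟨ha, hb, hlen, hinj, hint⟩
    refine ⟨ha, hb, hlen, ?_, ?_⟩
    · rw [Walk.tail_support_eq_map, nodup_map_range_iff]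
      intro i j hij hj
      exact hinj (i + 1) (j + 1) (by omega) (by omega) (by omega)
    · intro x hx
      rw [P.dropLast_tail_support_eq_map hlen] at hx
      obtain ⟨i, hi, rfl⟩ := List.mem_map.1 hx
      exact hint (i + 1) (by omega) (by have := List.mem_range.1 hi; omega)

lemma core (G : SimpleGraph V) (D : Set V) {a b : V} (P : G.Walk a b)
    (hEar : IsDEar G D P)
    (hMin : ∀ (c d : V) (Q : G.Walk c d), IsDEar G D Q →
      s(a, P.getVert 1) ∈ Q.edges → P.length ≤ Q.length)
    (i : ℕ) (hi : i ≤ P.length) {y : V} (hy : y ∈ D)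
    (W : G.Walk (P.getVert i) y)
    (hWD : ∀ s, s < W.length → W.getVert s ∉ D)
    (hWinj : ∀ s t, s < t → t ≤ W.length → W.getVert s ≠ W.getVert t) :
    min i (P.length - i) ≤ W.length := by
  classical
  by_contra hcon
  push_neg at hcon
  obtain ⟨ha, hb, hlen, hinj, hint⟩ := (isDEar_iff G D P).1 hEar
  have h1 : W.length < i := lt_of_lt_of_le hcon (min_le_left _ _)
  have h2 : W.length < P.length - i := lt_of_lt_of_le hcon (min_le_right _ _)
  have hi1 : 1 ≤ i := by omega
  have hip : i < P.length := by omega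
  set S : Finset ℕ := (Finset.range (W.length + 1)).filter
    (fun s => ∃ j, 1 ≤ j ∧ j ≤ i ∧ W.getVert s = P.getVert j) with hS
  have h0S : (0 : ℕ) ∈ S := by
    simp only [hS, Finset.mem_filter, Finset.mem_range]
    exact ⟨by omega, i, hi1, le_rfl, by simp⟩
  have hSne : S.Nonempty := ⟨0, h0S⟩
  set r := S.max' hSne with hr
  have hrS : r ∈ S := S.max'_mem hSne
  rw [hS, Finset.mem_filter, Finset.mem_range] at hrS
  obtain ⟨hrle, j, hj1, hji, hWr⟩ := hrS
  have hrle : r ≤ W.length := by omega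
  have hjint : P.getVert j ∉ D := hint j hj1 (by omega)
  have hrlt : r < W.length := by
    rcases lt_or_eq_of_le hrle with h | h
    · exact h
    · exfalso
      rw [h, Walk.getVert_length] at hWr
      exact hjint (hWr ▸ hy)
  have hmax : ∀ s, s ≤ W.length →
      (∃ j', 1 ≤ j' ∧ j' ≤ i ∧ W.getVert s = P.getVert j') → s ≤ r := by
    intro s h1s h2s
    refine S.le_max' s ?_
    rw [hS, Finset.mem_filter, Finset.mem_range]
    exact ⟨by omega, h2s⟩
  set R : G.Walk a y := (P.take j).append ((W.drop r).copy hWr rfl) with hRdef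
  have hlenR : R.length = j + (W.length - r) := by
    simp only [hRdef, Walk.length_append, Walk.length_copy, Walk.length_take, Walk.length_drop]
    omega
  have hR1 : ∀ s, s ≤ j → R.getVert s = P.getVert s := by
    intro s hs
    rw [hRdef, Walk.getVert_append]
    rcases lt_or_eq_of_le hs with h | h
    · rw [if_pos (by simpa using by omega), Walk.getVert_take]
      congr 1
      omega
    · subst h
      rw [if_neg (by simp), Walk.getVert_copy, Walk.getVert_drop]
      simp only [Walk.length_take]
      rw [show min s P.length = s by omega, Nat.sub_self, Nat.add_zero]
      exact hWr
  have hR2 : ∀ s, j ≤ s → R.getVert s = W.getVert (r + (s - j)) := by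
    intro s hs
    rcases lt_or_eq_of_le hs with h | h
    · rw [hRdef, Walk.getVert_append, if_neg (by simp only [Walk.length_take]; omega),
        Walk.getVert_copy, Walk.getVert_drop]
      congr 1
      simp only [Walk.length_take]
      omega
    · rw [← h, hR1 j le_rfl, Nat.sub_self, Nat.add_zero]
      exact hWr.symm
  have hRear : IsDEar G D R := by
    rw [isDEar_iff]
    refine ⟨ha, hy, by omega, ?_, ?_⟩
    · intro s t hs hst htl
      rw [hlenR] at htl
      by_cases ht : t ≤ j
      · rw [hR1 s (by omega), hR1 t ht]
        exact hinj s t hs hst (by omega)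
      · rw [hR2 t (by omega)]
        by_cases hs' : s ≤ j
        · rw [hR1 s hs']
          intro heq
          by_cases hend : r + (t - j) = W.length
          · rw [hend, Walk.getVert_length] at heq
            exact hint s hs (by omega) (heq ▸ hy)
          · have := hmax (r + (t - j)) (by omega) ⟨s, hs, by omega, heq.symm⟩
            omega
        · rw [hR2 s (by omega)]
          exact hWinj _ _ (by omega) (by omega)
    · intro s hs hsl
      rw [hlenR] at hsl
      by_cases hs' : s ≤ j
      · rw [hR1 s hs']
        exact hint s hs (by omega)
      · rw [hR2 s (by omega)]
        exact hWD _ (by omega)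
  have hedge : s(a, P.getVert 1) ∈ R.edges := by
    rw [hRdef, Walk.edges_append]
    refine List.mem_append_left _ ?_
    have h0 : 0 < (P.take j).length := by
      rw [Walk.length_take]; omega
    have h1 := (P.take j).firstEdge_mem h0
    rwa [Walk.getVert_take, show min 1 j = 1 by omega] at h1
  have := hMin a y R hRear hedge
  omega

end Helpers

/-- An acceptable `D`-ear: a `D`-ear that is a shortest `D`-ear among those containing its
first edge, or a shortest `D`-ear among those containing its last edge. -/
def IsAcceptableDEar (G : SimpleGraph V) (D : Set V) {a b : V} (P : G.Walk a b) : Prop :=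
  IsDEar G D P ∧
    ((∀ (c d : V) (Q : G.Walk c d), IsDEar G D Q →
        s(a, P.getVert 1) ∈ Q.edges → P.length ≤ Q.length) ∨
     (∀ (c d : V) (Q : G.Walk c d), IsDEar G D Q →
        s(P.getVert (P.length - 1), b) ∈ Q.edges → P.length ≤ Q.length))

/-- The distance (in `ℕ∞`) from a vertex `x` to a set of vertices `D` in a graph `G`. -/
noncomputable def edistToSet (G : SimpleGraph V) (x : V) (D : Set V) : ℕ∞ :=
  ⨅ y ∈ D, G.edist x y

/-- If `P` is an acceptable `D`-ear in a finite graph `G`, for a proper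
subset `D` of the vertices, then for every vertex `x` on `P` the distance from `x` to `D`
in `G` equals the distance from `x` to `D` measured along `P`. -/
theorem acceptable_ear_distance {V : Type*} [Fintype V]
    (G : SimpleGraph V) (D : Set V) (hD : D ⊂ Set.univ)
    {a b : V} (P : G.Walk a b) (hP : IsAcceptableDEar G D P) :
    ∀ x ∈ P.support,
      edistToSet G x D = edistToSet (SimpleGraph.fromEdgeSet {e | e ∈ P.edges}) x D := by
  classical
  obtain ⟨hEar, hAcc⟩ := hP
  obtain ⟨ha, hb, hlen, hinj, hint⟩ := (isDEar_iff G D P).1 hEar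
  intro x hx
  rw [Walk.support_eq_map_range] at hx
  obtain ⟨i, hi', rfl⟩ := List.mem_map.1 hx
  have hi : i ≤ P.length := by have := List.mem_range.1 hi'; omega
  set G' := SimpleGraph.fromEdgeSet {e | e ∈ P.edges} with hG'
  have hG'le : G' ≤ G := by
    intro u v huv
    rw [hG', fromEdgeSet_adj] at huv
    exact P.edges_subset_edgeSet huv.1
  have hPedges : ∀ e ∈ P.edges, e ∈ G'.edgeSet := by
    intro e he
    rw [hG', edgeSet_fromEdgeSet]
    exact ⟨he, G.not_isDiag_of_mem_edgeSet (P.edges_subset_edgeSet he)⟩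
  set P' : G'.Walk a b := P.transfer G' hPedges with hP'
  have hxP' : P'.getVert i = P.getVert i := P.getVert_transfer hPedges i
  have hlenP' : P'.length = P.length := P.length_transfer hPedges
  -- upper bounds in G'
  have hub1 : edistToSet G' (P.getVert i) D ≤ (i : ℕ∞) := by
    refine le_trans (iInf₂_le a ha) ?_
    have hw := edist_le (((P'.take i).reverse).copy hxP' rfl)
    refine le_trans hw ?_
    simp only [Walk.length_copy, Walk.length_reverse, Walk.length_take, hlenP']
    rw [min_eq_left hi]
  have hub2 : edistToSet G' (P.getVert i) D ≤ ((P.length - i : ℕ) : ℕ∞) := by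
    refine le_trans (iInf₂_le b hb) ?_
    have hw := edist_le ((P'.drop i).copy (by rw [hxP']) rfl)
    refine le_trans hw ?_
    simp only [Walk.length_copy, Walk.length_drop, hlenP']
    exact le_rfl
  -- monotonicity
  have hmono : edistToSet G (P.getVert i) D ≤ edistToSet G' (P.getVert i) D := by
    unfold edistToSet
    exact iInf₂_mono fun y hy => edist_anti hG'le
  -- the G-distance is finite
  have hlt : edistToSet G (P.getVert i) D < ⊤ :=
    lt_of_le_of_lt (hmono.trans hub1) (WithTop.coe_lt_top i)
  obtain ⟨n, hn⟩ : ∃ n : ℕ, edistToSet G (P.getVert i) D = (n : ℕ∞) :=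
    WithTop.ne_top_iff_exists.1 hlt.ne |>.imp fun n h => h.symm
  -- a vertex of D attaining the distance
  have hex : ∃ y ∈ D, G.edist (P.getVert i) y = (n : ℕ∞) := by
    by_contra hcon
    push_neg at hcon
    have hstep : (n : ℕ∞) + 1 ≤ edistToSet G (P.getVert i) D := by
      refine le_iInf₂ fun y hy => ?_
      have h1 : (n : ℕ∞) ≤ G.edist (P.getVert i) y := hn ▸ iInf₂_le y hy
      exact (ENat.add_one_le_iff (by simp)).2 (lt_of_le_of_ne h1 (fun h => hcon y hy h.symm))
    rw [hn] at hstep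
    exact absurd hstep (by exact_mod_cast Nat.not_succ_le_self n)
  obtain ⟨y, hy, hey⟩ := hex
  obtain ⟨W₀, hW₀⟩ := exists_walk_of_edist_eq_coe hey
  set W := W₀.bypass with hW
  have hWlen : W.length = n := by
    refine le_antisymm ((Walk.length_bypass_le W₀).trans hW₀.le) ?_
    have h1 := edist_le W
    rw [hey] at h1
    exact_mod_cast h1
  have hWD : ∀ s, s < W.length → W.getVert s ∉ D := by
    intro s hs hsD
    have h1 : edistToSet G (P.getVert i) D ≤ (s : ℕ∞) := by
      refine le_trans (iInf₂_le _ hsD) ?_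
      refine le_trans (edist_le (W.take s)) ?_
      rw [Walk.length_take, min_eq_left hs.le]
    rw [hn] at h1
    have : n ≤ s := by exact_mod_cast h1
    omega
  have hWinj : ∀ s t, s < t → t ≤ W.length → W.getVert s ≠ W.getVert t := by
    have hnd : W.support.Nodup := (W₀.bypass_isPath).support_nodup
    rw [Walk.support_eq_map_range, nodup_map_range_iff] at hnd
    intro s t hst ht
    exact hnd s t hst (by omega)
  -- lower bound via the core lemma
  have hlb : min i (P.length - i) ≤ n := by
    rw [← hWlen]
    rcases hAcc with hL | hR
    · exact core G D P hEar hL i hi hy W hWD hWinj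
    · have hrev : P.reverse.getVert (P.length - i) = P.getVert i := by
        rw [Walk.getVert_reverse]
        congr 1
        omega
      have hEarRev : IsDEar G D P.reverse := by
        rw [isDEar_iff]
        simp only [Walk.length_reverse]
        refine ⟨hb, ha, hlen, ?_, ?_⟩
        · intro s t hs hst htl
          rw [Walk.getVert_reverse, Walk.getVert_reverse]
          rcases eq_or_lt_of_le htl with rfl | h
          · rw [Nat.sub_self]
            intro heq
            rw [P.getVert_zero] at heq
            exact hint (P.length - s) (by omega) (by omega) (by rw [heq]; exact ha)
          · exact (hinj (P.length - t) (P.length - s) (by omega) (by omega) (by omega)).symm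
        · intro s hs hsl
          rw [Walk.getVert_reverse]
          exact hint (P.length - s) (by omega) (by omega)
      have hMinRev : ∀ (c d : V) (Q : G.Walk c d), IsDEar G D Q →
          s(b, P.reverse.getVert 1) ∈ Q.edges → P.reverse.length ≤ Q.length := by
        intro c d Q hQ he
        rw [Walk.length_reverse]
        refine hR c d Q hQ ?_
        rw [Walk.getVert_reverse] at he
        rwa [Sym2.eq_swap]
      have hcore := core G D P.reverse hEarRev hMinRev (P.length - i)
        (by rw [Walk.length_reverse]; omega) hy (W.copy hrev.symm rfl)
        (by simpa using hWD) (by simpa using hWinj)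
      rw [Walk.length_copy, Walk.length_reverse] at hcore
      rw [show P.length - (P.length - i) = i by omega] at hcore
      omega
  -- conclusion
  refine le_antisymm hmono ?_
  rw [hn]
  refine le_trans (le_min hub1 hub2) ?_
  exact_mod_cast Nat.cast_le.2 (by exact_mod_cast hlb)
end

section
/- Let G be a finite bridgeless (2-edge-connected) connected chordal graph (a graph with no induced cycle of length greater than 3) with radius r. Then the rainbow connection number of G satisfies rc(G) ≤ 3r. -/
open SimpleGraph

variable {V : Type*}

/-- An edge colouring `c` makes `G` rainbow connected if every pair of vertices is joined
by a path whose edges all receive distinct colours. -/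
def RainbowConnected (G : SimpleGraph V) (c : Sym2 V → ℕ) : Prop :=
  ∀ u v : V, ∃ p : G.Walk u v, p.IsPath ∧ (p.edges.map c).Nodup

/-- The rainbow connection number of `G`: the least `n` such that some edge colouring with
colours from `{0, …, n-1}` makes `G` rainbow connected. -/
noncomputable def rc (G : SimpleGraph V) : ℕ :=
  sInf {n | ∃ c : Sym2 V → ℕ, (∀ e ∈ G.edgeSet, c e < n) ∧ RainbowConnected G c}

/-- `G` is bridgeless: no edge of `G` is a bridge. -/
def Bridgeless (G : SimpleGraph V) : Prop := ∀ e ∈ G.edgeSet, ¬ G.IsBridge e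

/-- A cycle in `G` is isometric if the distance between any two of its vertices measured
along the cycle equals their distance in `G`. -/
def IsIsometricCycle (G : SimpleGraph V) {v : V} (p : G.Walk v v) : Prop :=
  p.IsCycle ∧ ∀ x ∈ p.support, ∀ y ∈ p.support,
    (SimpleGraph.fromEdgeSet {e | e ∈ p.edges}).dist x y = G.dist x y

/-- `isoNum G`: the size (length) of a largest isometric cycle in `G`. -/
noncomputable def isoNum (G : SimpleGraph V) : ℕ :=
  sSup {n | ∃ (v : V) (p : G.Walk v v), IsIsometricCycle G p ∧ p.length = n}

/-- The radius of `G`: the minimum over vertices `v` of the eccentricity of `v`. -/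
noncomputable def radius (G : SimpleGraph V) : ℕ :=
  (⨅ v : V, ⨆ u : V, G.edist v u).toNat

/-- An induced cycle in `G`: a cycle with no chords, i.e. every edge of `G` between two
vertices of the cycle is an edge of the cycle. -/
def IsInducedCycle (G : SimpleGraph V) {v : V} (p : G.Walk v v) : Prop :=
  p.IsCycle ∧ ∀ x ∈ p.support, ∀ y ∈ p.support, G.Adj x y → s(x, y) ∈ p.edges

/-- The chordality of `G`: the length of a largest induced cycle in `G`. -/
noncomputable def chordality (G : SimpleGraph V) : ℕ :=
  sSup {n | ∃ (v : V) (p : G.Walk v v), IsInducedCycle G p ∧ p.length = n}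

namespace RCAux

section Part1


variable {V : Type*} {G : SimpleGraph V}

lemma edges_dropUntil_sublist [DecidableEq V] {v w u : V} (p : G.Walk v w)
    (h : u ∈ p.support) : (p.dropUntil u h).edges.Sublist p.edges := by
  conv_rhs => rw [← p.take_spec h]
  rw [SimpleGraph.Walk.edges_append]
  exact List.sublist_append_right _ _

lemma edges_bypass_sublist [DecidableEq V] {u v : V} (p : G.Walk u v) :
    p.bypass.edges.Sublist p.edges := by
  induction p with
  | nil => simp [SimpleGraph.Walk.bypass]
  | cons ha p ih =>
    simp only [SimpleGraph.Walk.bypass]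
    split_ifs with hs
    · exact ((edges_dropUntil_sublist _ hs).trans ih).trans (List.sublist_cons_self _ _)
    · rw [SimpleGraph.Walk.edges_cons, SimpleGraph.Walk.edges_cons]
      exact ih.cons₂ _

lemma exists_rainbow_path (c : Sym2 V → ℕ) {u v : V} (W : G.Walk u v)
    (h : (W.edges.map c).Nodup) :
    ∃ p : G.Walk u v, p.IsPath ∧ (p.edges.map c).Nodup := by
  classical
  exact ⟨W.bypass, W.bypass_isPath, h.sublist ((edges_bypass_sublist W).map c)⟩


end Part1

section Part2


variable {V : Type*} {G : SimpleGraph V}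

open SimpleGraph.Walk

lemma end_mem_tail_support {u v : V} (p : G.Walk u v) (h : u ≠ v) : v ∈ p.support.tail := by
  cases p with
  | nil => exact absurd rfl h
  | cons h' p' => simpa using p'.end_mem_support

lemma edges_of_length_one {u v : V} {p : G.Walk u v} (h : p.length = 1) :
    p.edges = [s(u, v)] := by
  cases p with
  | nil => simp at h
  | @cons _ w _ h' p' =>
    have h0 : p'.length = 0 := by simpa using h
    have hwv : w = v := Walk.eq_of_length_eq_zero h0
    subst hwv
    have : p'.edges = [] := List.length_eq_zero_iff.mp (by rw [p'.length_edges]; exact h0)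
    simp [this]

lemma split_cycle [DecidableEq V] {x' : V} (q : G.Walk x' x') (hq : q.IsCycle) {y' : V}
    (hy : y' ∈ q.support) (hyx : y' ≠ x') (hadj : G.Adj x' y') (hchord : s(x', y') ∉ q.edges) :
    ∃ (c1 c2 : G.Walk x' x'), c1.IsCycle ∧ c2.IsCycle ∧ c1.length < q.length ∧
      c2.length < q.length ∧ ∀ e ∈ q.edges, e ∈ c1.edges ∨ e ∈ c2.edges := by
  cases q with
  | nil => exact absurd rfl hq.ne_nil
  | @cons _ b₁ _ h₁ q₀ =>
    rw [cons_isCycle_iff] at hq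
    obtain ⟨hq₀path, hfe⟩ := hq
    have hy₀ : y' ∈ q₀.support := by
      rw [support_cons, List.mem_cons] at hy
      rcases hy with h | h
      · exact absurd h hyx
      · exact h
    have hyb : y' ≠ b₁ := by
      rintro rfl
      exact hchord (by simp [edges_cons])
    -- pieces
    set t1 := q₀.takeUntil y' hy₀ with ht1
    set t2 := q₀.dropUntil y' hy₀ with ht2
    have hspec : t1.append t2 = q₀ := q₀.take_spec hy₀
    have ht1path : t1.IsPath := hq₀path.takeUntil hy₀
    have ht2path : t2.IsPath := hq₀path.dropUntil hy₀
    have hedges : q₀.edges = t1.edges ++ t2.edges := by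
      rw [← hspec, edges_append]
    have hlen : q₀.length = t1.length + t2.length := by
      conv_lhs => rw [← hspec]
      rw [length_append]
    have ht2len : 0 < t2.length := by
      rcases Nat.eq_zero_or_pos t2.length with h | h
      · exact absurd (Walk.eq_of_length_eq_zero h) hyx
      · exact h
    have ht1len : 0 < t1.length := by
      rcases Nat.eq_zero_or_pos t1.length with h | h
      · exact absurd (Walk.eq_of_length_eq_zero h).symm hyb
      · exact h
    -- x' not in t1.support
    have hx't2 : x' ∈ t2.support.tail := end_mem_tail_support t2 hyx
    have hx't1 : x' ∉ t1.support := by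
      intro hmem
      have hnodup := hq₀path.support_nodup
      rw [← hspec, support_append, List.nodup_append] at hnodup
      exact hnodup.2.2 x' hmem x' hx't2 rfl
    -- first cycle
    have hchord_t2 : s(x', y') ∉ t2.edges := fun h => hchord (by
      rw [edges_cons, hedges]; simp [h])
    have hc1 : (Walk.cons hadj t2).IsCycle := (cons_isCycle_iff _ _).mpr ⟨ht2path, hchord_t2⟩
    -- second cycle
    have hinner_path : (t1.append (Walk.cons hadj.symm Walk.nil)).IsPath := by
      rw [isPath_def, support_append]
      simp only [support_cons, support_nil, List.tail_cons]
      rw [List.nodup_append]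
      refine ⟨ht1path.support_nodup, List.nodup_singleton _, ?_⟩
      intro a ha b hb hab
      rw [List.mem_singleton] at hb
      rw [hab, hb] at ha
      exact hx't1 ha
    have hfe_inner : s(x', b₁) ∉ (t1.append (Walk.cons hadj.symm Walk.nil)).edges := by
      rw [edges_append]
      simp only [edges_cons, edges_nil, List.mem_append, List.mem_singleton]
      rintro (h | h)
      · exact hfe (by rw [hedges]; simp [h])
      · rw [Sym2.eq_iff] at h
        rcases h with ⟨h1, h2⟩ | ⟨h1, h2⟩
        · exact hadj.ne h1
        · exact hyb h2.symm
    have hc2 : (Walk.cons h₁ (t1.append (Walk.cons hadj.symm Walk.nil))).IsCycle :=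
      (cons_isCycle_iff _ _).mpr ⟨hinner_path, hfe_inner⟩
    -- t2.length ≥ 2
    have ht2len2 : 1 < t2.length := by
      rcases Nat.lt_or_ge 1 t2.length with h | h
      · exact h
      · exfalso
        have h1 : t2.length = 1 := le_antisymm h ht2len
        have he2 : t2.edges = [s(y', x')] := edges_of_length_one h1
        refine hchord ?_
        rw [edges_cons, hedges, he2]
        simp [Sym2.eq_swap]
    refine ⟨Walk.cons hadj t2, Walk.cons h₁ (t1.append (Walk.cons hadj.symm Walk.nil)),
      hc1, hc2, ?_, ?_, ?_⟩
    · simp only [length_cons]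
      omega
    · simp only [length_cons, length_append, length_nil]
      omega
    · intro e he
      rw [edges_cons, hedges] at he
      simp only [List.mem_cons, List.mem_append] at he
      rcases he with h | h | h
      · right; rw [edges_cons]; simp [h]
      · right; rw [edges_cons, edges_append]; simp [h]
      · left; rw [edges_cons]; simp [h]

lemma mem_tail_support_of_mem_support {u y : V} {p : G.Walk u u} (hnil : p ≠ Walk.nil)
    (hy : y ∈ p.support) : y ∈ p.support.tail := by
  cases p with
  | nil => exact absurd rfl hnil
  | cons h' p' =>
    rw [support_cons, List.tail_cons]
    rw [support_cons, List.mem_cons] at hy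
    rcases hy with rfl | hy
    · exact p'.end_mem_support
    · exact hy

lemma triangle_of_three_cycle {u x a : V} (p : G.Walk u u) (hp3 : p.length = 3)
    (he : s(x, a) ∈ p.edges) : ∃ t, G.Adj x t ∧ G.Adj a t := by
  cases p with
  | nil => simp at hp3
  | @cons _ b _ h1 p1 =>
    cases p1 with
    | nil => simp at hp3
    | @cons _ d _ h2 p2 =>
      cases p2 with
      | nil => simp at hp3
      | @cons _ e _ h3 p3 =>
        have h0 : p3.length = 0 := by
          simp only [length_cons] at hp3
          omega
        have hev : e = u := Walk.eq_of_length_eq_zero h0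
        subst hev
        have hp3e : p3.edges = [] := List.length_eq_zero_iff.mp (by rw [p3.length_edges]; exact h0)
        rw [edges_cons, edges_cons, edges_cons, hp3e] at he
        simp only [List.mem_cons, List.not_mem_nil, or_false] at he
        rcases he with h | h | h <;> rw [Sym2.eq_iff] at h <;>
          rcases h with ⟨rfl, rfl⟩ | ⟨rfl, rfl⟩
        · exact ⟨d, h3.symm, h2⟩
        · exact ⟨d, h2, h3.symm⟩
        · exact ⟨_, h1.symm, h3⟩
        · exact ⟨_, h3, h1.symm⟩
        · exact ⟨b, h2.symm, h1⟩
        · exact ⟨b, h1, h2.symm⟩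

lemma triangle_of_cycle (hch : ∀ (v : V) (p : G.Walk v v), IsInducedCycle G p → p.length ≤ 3) :
    ∀ (n : ℕ) (u x a : V) (p : G.Walk u u), p.IsCycle → s(x, a) ∈ p.edges → p.length ≤ n →
    ∃ t, G.Adj x t ∧ G.Adj a t := by
  classical
  intro n
  induction n with
  | zero =>
    intro u x a p hp _ hl
    have := hp.three_le_length
    omega
  | succ n ih =>
    intro u x a p hp he hl
    by_cases hind : ∀ x' ∈ p.support, ∀ y' ∈ p.support, G.Adj x' y' → s(x', y') ∈ p.edges
    · have h3 := hch u p ⟨hp, hind⟩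
      have h3' := hp.three_le_length
      exact triangle_of_three_cycle p (le_antisymm h3 h3') he
    · push_neg at hind
      obtain ⟨x', hx', y', hy', hadj, hchord⟩ := hind
      have hperm := p.rotate_edges x' hx'
      have hy'tail : y' ∈ p.support.tail :=
        mem_tail_support_of_mem_support hp.ne_nil hy'
      have hyq : y' ∈ (p.rotate x' hx').support := by
        have h' : y' ∈ (p.rotate x' hx').support.tail :=
          ((p.support_rotate x' hx').mem_iff).mpr hy'tail
        exact List.mem_of_mem_tail h'
      obtain ⟨c1, c2, hc1, hc2, hl1, hl2, hcov⟩ :=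
        split_cycle (p.rotate x' hx') (hp.rotate hx') hyq hadj.ne' hadj
          (fun hc => hchord (hperm.mem_iff.mp hc))
      have heq : s(x, a) ∈ (p.rotate x' hx').edges := hperm.mem_iff.mpr he
      have hqlen : (p.rotate x' hx').length = p.length := by
        have h' := hperm.perm.length_eq
        rwa [length_edges, length_edges] at h'
      rcases hcov _ heq with h | h
      · exact ih x' x a c1 hc1 h (by omega)
      · exact ih x' x a c2 hc2 h (by omega)

lemma adj_triangle (hbl : Bridgeless G)
    (hch : ∀ (v : V) (p : G.Walk v v), IsInducedCycle G p → p.length ≤ 3)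
    {x a : V} (h : G.Adj x a) : ∃ t, G.Adj x t ∧ G.Adj a t := by
  have he : s(x, a) ∈ G.edgeSet := h
  have hnb := hbl _ he
  rw [SimpleGraph.isBridge_iff_mem_and_forall_cycle_notMem] at hnb
  push_neg at hnb
  obtain ⟨u, p, hp, hep⟩ := hnb
  exact triangle_of_cycle hch p.length u x a p hp hep le_rfl
  exact he


end Part2

section Part3


attribute [local instance] Classical.propDecidable

variable {V : Type*} (G : SimpleGraph V) (z : V)

/-- The set of neighbours of `v` one level closer to the center `z`. -/
def low (v : V) : Set V := {a | G.Adj v a ∧ G.dist z a + 1 = G.dist z v}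

/-- `v` has at least two neighbours one level down. -/
def Rich (v : V) : Prop := ∃ a ∈ low G z v, ∃ b ∈ low G z v, a ≠ b

/-- A canonical choice of down-neighbour. -/
noncomputable def a1 (v : V) : V :=
  if h : (low G z v).Nonempty then h.choose else z

/-- The auxiliary "partnership" graph on poor vertices. -/
def pg : SimpleGraph V where
  Adj x y := G.Adj x y ∧ ¬Rich G z x ∧ ¬Rich G z y ∧ G.dist z x = G.dist z y ∧
    a1 G z x = a1 G z y
  symm := by
    constructor
    rintro x y ⟨h1, h2, h3, h4, h5⟩
    exact ⟨h1.symm, h3, h2, h4.symm, h5.symm⟩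
  loopless := by
    constructor
    rintro x ⟨h1, -⟩
    exact G.loopless.irrefl x h1

/-- Colour (0 or 2) of the unique down-edge of a poor vertex, via parity in `pg`. -/
noncomputable def colPoor (v : V) : ℕ :=
  if Even ((pg G z).dist ((pg G z).connectedComponentMk v).out v) then 0 else 2

/-- Colour of a cross edge from `v` (level `k`) down to `a` (level `k-1`). -/
noncomputable def crossCol (v a : V) : ℕ :=
  3 * (G.dist z v - 1) +
    (if Rich G z v then (if a = a1 G z v then 0 else 2) else colPoor G z v)

/-- The global edge colouring. -/
noncomputable def col : Sym2 V → ℕ :=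
  Sym2.lift ⟨fun u v =>
    if G.dist z u = G.dist z v then 3 * (G.dist z u - 1) + 1
    else if G.dist z u < G.dist z v then crossCol G z v u else crossCol G z u v,
    by
      intro u v
      dsimp only
      rcases lt_trichotomy (G.dist z u) (G.dist z v) with h | h | h
      · rw [if_neg (by omega), if_pos h, if_neg (by omega), if_neg (by omega)]
      · rw [if_pos h, if_pos h.symm, h]
      · rw [if_neg (by omega), if_neg (by omega), if_neg (by omega), if_pos h]⟩

variable {G z}

lemma col_mk (u v : V) : col G z s(u, v) =
    if G.dist z u = G.dist z v then 3 * (G.dist z u - 1) + 1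
    else if G.dist z u < G.dist z v then crossCol G z v u else crossCol G z u v := by
  simp [col]

lemma col_same {u v : V} (h : G.dist z u = G.dist z v) :
    col G z s(u, v) = 3 * (G.dist z u - 1) + 1 := by
  rw [col_mk, if_pos h]

lemma col_cross {v a : V} (h : G.dist z a + 1 = G.dist z v) :
    col G z s(v, a) = crossCol G z v a := by
  rw [col_mk, if_neg (by omega), if_neg (by omega)]

lemma crossCol_bound {v a : V} : crossCol G z v a ≤ 3 * (G.dist z v - 1) + 2 := by
  rw [crossCol]
  split_ifs <;> simp [colPoor] <;> split_ifs <;> omega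

lemma colPoor_eq_zero_or_two (v : V) : colPoor G z v = 0 ∨ colPoor G z v = 2 := by
  rw [colPoor]; split_ifs <;> simp

lemma dist_le_of_adj (hconn : G.Connected) {u v : V} (h : G.Adj u v) :
    G.dist z u ≤ G.dist z v + 1 := by
  have h1 := hconn.dist_triangle (u := z) (v := v) (w := u)
  have h2 : G.dist v u = 1 := dist_eq_one_iff_adj.mpr h.symm
  omega

lemma parent_exists (hconn : G.Connected) {v : V} {k : ℕ} (h : G.dist z v = k + 1) :
    ∃ a, a ∈ low G z v := by
  obtain ⟨p, hp⟩ := hconn.exists_walk_length_eq_dist v z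
  rw [dist_comm] at hp
  cases p with
  | nil => rw [Walk.length_nil] at hp; omega
  | @cons _ b _ h' q =>
    have hq : q.length = k := by
      rw [Walk.length_cons] at hp
      omega
    have hb1 : G.dist z b ≤ k := by
      have h2 := SimpleGraph.dist_le q
      rw [dist_comm] at h2
      omega
    have hb2 : G.dist z v ≤ G.dist z b + 1 := dist_le_of_adj hconn h'
    exact ⟨b, h', by omega⟩

lemma a1_mem {v : V} (h : (low G z v).Nonempty) : a1 G z v ∈ low G z v := by
  rw [a1, dif_pos h]
  exact h.choose_spec

lemma a1_eq_of_not_rich {v a : V} (hnr : ¬Rich G z v) (ha : a ∈ low G z v) :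
    a1 G z v = a := by
  by_contra hne
  exact hnr ⟨_, a1_mem ⟨a, ha⟩, a, ha, hne⟩

lemma pg_reachable_out (v : V) : (pg G z).Reachable ((pg G z).connectedComponentMk v).out v :=
  SimpleGraph.ConnectedComponent.exact (Quot.out_eq _)

lemma parity_neighbor {v y0 : V} (h : (pg G z).Adj v y0) :
    ∃ y, (pg G z).Adj v y ∧ colPoor G z y ≠ colPoor G z v := by
  set H := pg G z with hH
  set ρ := (H.connectedComponentMk v).out with hρ
  clear_value ρ
  have hout : ∀ x y : V, H.Adj x y →
      (H.connectedComponentMk x).out = (H.connectedComponentMk y).out := by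
    intro x y hxy
    exact congrArg _ ((SimpleGraph.ConnectedComponent.eq).mpr hxy.reachable)
  have hreach : H.Reachable ρ v := hρ ▸ pg_reachable_out v
  rcases Nat.eq_zero_or_pos (H.dist ρ v) with h0 | hpos
  · have hrv : ρ = v := (hreach.dist_eq_zero_iff).mp h0
    refine ⟨y0, h, ?_⟩
    have houty : (H.connectedComponentMk y0).out = (H.connectedComponentMk v).out :=
      hout _ _ h.symm
    have hd : H.dist ρ y0 = 1 := by
      rw [hrv]
      exact dist_eq_one_iff_adj.mpr h
    show ¬ (if Even (H.dist (H.connectedComponentMk y0).out y0) then 0 else 2) =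
      if Even (H.dist (H.connectedComponentMk v).out v) then 0 else 2
    rw [houty, ← hρ, hd, h0]
    simp
  · obtain ⟨p, hp⟩ := (hreach.symm).exists_walk_length_eq_dist
    rw [SimpleGraph.dist_comm] at hp
    cases p with
    | nil => rw [Walk.length_nil] at hp; omega
    | @cons _ y _ h' q =>
      refine ⟨y, h', ?_⟩
      have hdy : H.dist ρ y + 1 = H.dist ρ v := by
        have h1 : H.dist ρ y ≤ H.dist ρ v - 1 := by
          have h2 := SimpleGraph.dist_le q
          rw [Walk.length_cons] at hp
          rw [SimpleGraph.dist_comm]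
          omega
        have h2 : H.dist ρ v ≤ H.dist ρ y + 1 := by
          obtain ⟨q', hq'⟩ := (hreach.trans h'.reachable).exists_walk_length_eq_dist
          have h3 := SimpleGraph.dist_le (q'.concat h'.symm)
          rw [Walk.length_concat, hq'] at h3
          exact h3
        omega
      have houty : (H.connectedComponentMk y).out = (H.connectedComponentMk v).out :=
        hout _ _ h'.symm
      show ¬ (if Even (H.dist (H.connectedComponentMk y).out y) then 0 else 2) =
        if Even (H.dist (H.connectedComponentMk v).out v) then 0 else 2
      rw [houty, ← hρ, ← hdy]
      rcases Nat.even_or_odd (H.dist ρ y) with he | ho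
      · simp [he, Nat.even_add_one]
      · simp [Nat.not_even_iff_odd.mpr ho, Nat.even_add_one]


lemma mem_low {v a : V} (h : a ∈ low G z v) : G.Adj v a ∧ G.dist z a + 1 = G.dist z v := h

lemma partner (hconn : G.Connected)
    (htri : ∀ {x a : V}, G.Adj x a → ∃ t, G.Adj x t ∧ G.Adj a t)
    {v : V} {k : ℕ} (hd : G.dist z v = k + 1) (hnr : ¬Rich G z v) :
    ∃ t, G.Adj v t ∧ G.dist z t = k + 1 ∧ (Rich G z t ∨ (pg G z).Adj v t) := by
  have hne : (low G z v).Nonempty := parent_exists hconn hd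
  have ha := a1_mem hne
  obtain ⟨hav, had⟩ := mem_low ha
  obtain ⟨t, htv, hta⟩ := htri hav
  have h1 : G.dist z v ≤ G.dist z t + 1 := dist_le_of_adj hconn htv
  have h2 : G.dist z t ≤ G.dist z (a1 G z v) + 1 := dist_le_of_adj hconn hta.symm
  have htk : G.dist z t = k + 1 := by
    rcases Nat.lt_or_ge (G.dist z t) (k + 1) with hlt | hge
    · exfalso
      have htlow : t ∈ low G z v := ⟨htv, by omega⟩
      exact hnr ⟨a1 G z v, ha, t, htlow, hta.ne⟩
    · omega
  by_cases hrt : Rich G z t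
  · exact ⟨t, htv, htk, Or.inl hrt⟩
  · have halow : a1 G z v ∈ low G z t := ⟨hta.symm, by omega⟩
    have ha1t : a1 G z t = a1 G z v := a1_eq_of_not_rich hrt halow
    exact ⟨t, htv, htk, Or.inr ⟨htv, hnr, hrt, by omega, ha1t.symm⟩⟩


/-- Extract from richness a second down-neighbour distinct from `a1`. -/
lemma rich_second {v : V} (hr : Rich G z v) :
    ∃ a', a' ∈ low G z v ∧ a' ≠ a1 G z v := by
  obtain ⟨b, hb, c, hc, hbc⟩ := hr
  by_cases hb1 : b = a1 G z v
  · exact ⟨c, hc, by rw [← hb1]; exact fun h => hbc h.symm⟩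
  · exact ⟨b, hb, hb1⟩

lemma routes (hconn : G.Connected)
    (htri : ∀ {x a : V}, G.Adj x a → ∃ t, G.Adj x t ∧ G.Adj a t)
    {v : V} {k : ℕ} (hd : G.dist z v = k + 1) :
    ∃ (u1 u2 : V) (W1 : G.Walk v u1) (W2 : G.Walk v u2),
      G.dist z u1 = k ∧ G.dist z u2 = k ∧
      ((W1.edges.map (col G z) = [3*k] ∧
        (W2.edges.map (col G z) = [3*k+2] ∨ W2.edges.map (col G z) = [3*k+1, 3*k+2])) ∨
       (W1.edges.map (col G z) = [3*k+1, 3*k] ∧ W2.edges.map (col G z) = [3*k+2])) := by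
  have hne : (low G z v).Nonempty := parent_exists hconn hd
  have ha := a1_mem hne
  obtain ⟨hav, had⟩ := mem_low ha
  have hcown : col G z s(v, a1 G z v) = crossCol G z v (a1 G z v) := col_cross had
  by_cases hr : Rich G z v
  · obtain ⟨a', ha', hne'⟩ := rich_second hr
    obtain ⟨ha'v, ha'd⟩ := mem_low ha'
    refine ⟨a1 G z v, a', Walk.cons hav Walk.nil, Walk.cons ha'v Walk.nil,
      by omega, by omega, Or.inl ⟨?_, Or.inl ?_⟩⟩
    · rw [Walk.edges_cons, Walk.edges_nil, List.map_cons, List.map_nil, hcown, crossCol,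
        if_pos hr, if_pos rfl, hd]; try simp
    · rw [Walk.edges_cons, Walk.edges_nil, List.map_cons, List.map_nil, col_cross ha'd,
        crossCol, if_pos hr, if_neg hne', hd]; try simp
  · -- poor vertex
    have hcown' : col G z s(v, a1 G z v) = 3*k + colPoor G z v := by
      rw [hcown, crossCol, if_neg hr, hd]; try simp
    obtain ⟨t, htv, htd, hcase⟩ := partner hconn htri hd hr
    have hvt : col G z s(v, t) = 3*k + 1 := by
      rw [col_same (by omega), hd]; try simp
    rcases hcase with hrt | hpg
    · -- rich partner
      have hnet : (low G z t).Nonempty := parent_exists hconn htd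
      have hat := a1_mem hnet
      obtain ⟨hatv, hatd⟩ := mem_low hat
      obtain ⟨a'', ha'', hne''⟩ := rich_second hrt
      obtain ⟨ha''v, ha''d⟩ := mem_low ha''
      have hc1 : col G z s(t, a1 G z t) = 3*k := by
        rw [col_cross hatd, crossCol, if_pos hrt, if_pos rfl, htd]; try simp
      have hc3 : col G z s(t, a'') = 3*k + 2 := by
        rw [col_cross ha''d, crossCol, if_pos hrt, if_neg hne'', htd]; try simp
      rcases colPoor_eq_zero_or_two (G := G) (z := z) v with hcp | hcp
      · refine ⟨a1 G z v, a'', Walk.cons hav Walk.nil,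
          Walk.cons htv (Walk.cons ha''v Walk.nil), by omega, by omega,
          Or.inl ⟨?_, Or.inr ?_⟩⟩
        · simp only [Walk.edges_cons, Walk.edges_nil, List.map_cons, List.map_nil]
          rw [hcown', hcp]; try simp
        · simp only [Walk.edges_cons, Walk.edges_nil, List.map_cons, List.map_nil]
          rw [hvt, hc3]; try simp
      · refine ⟨a1 G z t, a1 G z v, Walk.cons htv (Walk.cons hatv Walk.nil),
          Walk.cons hav Walk.nil, by omega, by omega, Or.inr ⟨?_, ?_⟩⟩
        · simp only [Walk.edges_cons, Walk.edges_nil, List.map_cons, List.map_nil]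
          rw [hvt, hc1]; try simp
        · simp only [Walk.edges_cons, Walk.edges_nil, List.map_cons, List.map_nil]
          rw [hcown', hcp]; try simp
    · -- poor partner: parity witness
      obtain ⟨y, hy, hcy⟩ := parity_neighbor hpg
      obtain ⟨hyv, -, hnry, hyd, -⟩ := hy
      have hydk : G.dist z y = k + 1 := by omega
      have hney : (low G z y).Nonempty := parent_exists hconn hydk
      have hay := a1_mem hney
      obtain ⟨hayv, hayd⟩ := mem_low hay
      have hcyown : col G z s(y, a1 G z y) = 3*k + colPoor G z y := by
        rw [col_cross hayd, crossCol, if_neg hnry, hydk]; try simp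
      have hvy : col G z s(v, y) = 3*k + 1 := by
        rw [col_same (by omega), hd]; try simp
      rcases colPoor_eq_zero_or_two (G := G) (z := z) v with hcp | hcp
      · have hcy2 : colPoor G z y = 2 := by
          rcases colPoor_eq_zero_or_two (G := G) (z := z) y with h0 | h2
          · exact absurd (h0.trans hcp.symm) hcy
          · exact h2
        refine ⟨a1 G z v, a1 G z y, Walk.cons hav Walk.nil,
          Walk.cons hyv (Walk.cons hayv Walk.nil), by omega, by omega,
          Or.inl ⟨?_, Or.inr ?_⟩⟩
        · simp only [Walk.edges_cons, Walk.edges_nil, List.map_cons, List.map_nil]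
          rw [hcown', hcp]; try simp
        · simp only [Walk.edges_cons, Walk.edges_nil, List.map_cons, List.map_nil]
          rw [hvy, hcyown, hcy2]; try simp
      · have hcy0 : colPoor G z y = 0 := by
          rcases colPoor_eq_zero_or_two (G := G) (z := z) y with h0 | h2
          · exact h0
          · exact absurd (h2.trans hcp.symm) hcy
        refine ⟨a1 G z y, a1 G z v, Walk.cons hyv (Walk.cons hayv Walk.nil),
          Walk.cons hav Walk.nil, by omega, by omega, Or.inr ⟨?_, ?_⟩⟩
        · simp only [Walk.edges_cons, Walk.edges_nil, List.map_cons, List.map_nil]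
          rw [hvy, hcyown, hcy0]; try simp
        · simp only [Walk.edges_cons, Walk.edges_nil, List.map_cons, List.map_nil]
          rw [hcown', hcp]; try simp


lemma palette_facts {k : ℕ} {l1 l2 : List ℕ}
    (h : (l1 = [3*k] ∧ (l2 = [3*k+2] ∨ l2 = [3*k+1, 3*k+2])) ∨
         (l1 = [3*k+1, 3*k] ∧ l2 = [3*k+2])) :
    l1.Nodup ∧ l2.Nodup ∧ (∀ x ∈ l1, 3*k ≤ x ∧ x < 3*k+3) ∧
      (∀ x ∈ l2, 3*k ≤ x ∧ x < 3*k+3) := by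
  rcases h with ⟨h1, h2 | h2⟩ | ⟨h1, h2⟩ <;> subst h1 <;> subst h2 <;>
    refine ⟨by simp; try omega, by simp; try omega, ?_, ?_⟩ <;>
    (intro x hx; simp at hx; omega)

lemma descent (hconn : G.Connected)
    (htri : ∀ {x a : V}, G.Adj x a → ∃ t, G.Adj x t ∧ G.Adj a t) :
    ∀ (k : ℕ) (v w : V), G.dist z v ≤ k → G.dist z w ≤ k →
    ∃ W : G.Walk v w, (W.edges.map (col G z)).Nodup ∧
      ∀ x ∈ W.edges.map (col G z), x < 3 * k := by
  intro k
  induction k with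
  | zero =>
    intro v w hv hw
    have hv' : z = v := (hconn.dist_eq_zero_iff).mp (Nat.le_zero.mp hv)
    have hw' : z = w := (hconn.dist_eq_zero_iff).mp (Nat.le_zero.mp hw)
    subst hv'; subst hw'
    exact ⟨Walk.nil, by simp, by simp⟩
  | succ k ih =>
    intro v w hv hw
    by_cases hv' : G.dist z v ≤ k
    · by_cases hw' : G.dist z w ≤ k
      · obtain ⟨W, h1, h2⟩ := ih v w hv' hw'
        exact ⟨W, h1, fun x hx => by have := h2 x hx; omega⟩
      · -- w at level k+1
        have hwk : G.dist z w = k + 1 := by omega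
        obtain ⟨u1, u2, W1, W2, hu1, hu2, hcase⟩ := routes hconn htri hwk
        obtain ⟨hn1, hn2, hb1, hb2⟩ := palette_facts
          (l1 := W1.edges.map (col G z)) (l2 := W2.edges.map (col G z)) hcase
        obtain ⟨M, hm1, hm2⟩ := ih v u1 hv' (by omega)
        refine ⟨M.append W1.reverse, ?_, ?_⟩
        · rw [Walk.edges_append, List.map_append, List.nodup_append]
          refine ⟨hm1, by rw [Walk.edges_reverse, List.map_reverse]; exact List.nodup_reverse.mpr hn1, ?_⟩
          intro x hx y hy hxy
          rw [Walk.edges_reverse, List.map_reverse, List.mem_reverse] at hy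
          have := hm2 x hx
          have := hb1 y hy
          omega
        · intro x hx
          rw [Walk.edges_append, List.map_append, List.mem_append] at hx
          rcases hx with hx | hx
          · have := hm2 x hx; omega
          · rw [Walk.edges_reverse, List.map_reverse, List.mem_reverse] at hx
            have := hb1 x hx; omega
    · have hvk : G.dist z v = k + 1 := by omega
      obtain ⟨u1, u2, W1, W2, hu1, hu2, hcase⟩ := routes hconn htri hvk
      obtain ⟨hn1, hn2, hb1, hb2⟩ := palette_facts
        (l1 := W1.edges.map (col G z)) (l2 := W2.edges.map (col G z)) hcase
      by_cases hw' : G.dist z w ≤ k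
      · obtain ⟨M, hm1, hm2⟩ := ih u1 w (by omega) hw'
        refine ⟨W1.append M, ?_, ?_⟩
        · rw [Walk.edges_append, List.map_append, List.nodup_append]
          refine ⟨hn1, hm1, ?_⟩
          intro x hx y hy hxy
          have := hb1 x hx
          have := hm2 y hy
          omega
        · intro x hx
          rw [Walk.edges_append, List.map_append, List.mem_append] at hx
          rcases hx with hx | hx
          · have := hb1 x hx; omega
          · have := hm2 x hx; omega
      · -- both at level k+1
        have hwk : G.dist z w = k + 1 := by omega
        obtain ⟨u1', u2', W1', W2', hu1', hu2', hcase'⟩ := routes hconn htri hwk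
        obtain ⟨hn1', hn2', hb1', hb2'⟩ := palette_facts
          (l1 := W1'.edges.map (col G z)) (l2 := W2'.edges.map (col G z)) hcase'
        -- choose the pair of routes
        have hkey : ∃ (a b : V) (Wv : G.Walk v a) (Ww : G.Walk w b),
            G.dist z a = k ∧ G.dist z b = k ∧
            (Wv.edges.map (col G z)).Nodup ∧ (Ww.edges.map (col G z)).Nodup ∧
            (∀ x ∈ Wv.edges.map (col G z), 3*k ≤ x ∧ x < 3*k+3) ∧
            (∀ x ∈ Ww.edges.map (col G z), 3*k ≤ x ∧ x < 3*k+3) ∧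
            (∀ x ∈ Wv.edges.map (col G z), ∀ y ∈ Ww.edges.map (col G z), x ≠ y) := by
          rcases hcase with ⟨h1, -⟩ | ⟨-, h2⟩
          · refine ⟨u1, u2', W1, W2', hu1, hu2', hn1, hn2', hb1, hb2', ?_⟩
            intro x hx y hy
            rw [h1, List.mem_singleton] at hx
            subst hx
            rcases hcase' with ⟨-, h2' | h2'⟩ | ⟨-, h2'⟩ <;> rw [h2'] at hy <;>
              simp at hy <;> omega
          · refine ⟨u2, u1', W2, W1', hu2, hu1', hn2, hn1', hb2, hb1', ?_⟩
            intro x hx y hy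
            rw [h2, List.mem_singleton] at hx
            subst hx
            rcases hcase' with ⟨h1', -⟩ | ⟨h1', -⟩ <;> rw [h1'] at hy <;>
              simp at hy <;> omega
        obtain ⟨a, b, Wv, Ww, hda, hdb, hnv, hnw, hbv, hbw, hdisj⟩ := hkey
        obtain ⟨M, hm1, hm2⟩ := ih a b (by omega) (by omega)
        refine ⟨Wv.append (M.append Ww.reverse), ?_, ?_⟩
        · rw [Walk.edges_append, Walk.edges_append, List.map_append, List.map_append,
            Walk.edges_reverse, List.map_reverse, List.nodup_append, List.nodup_append]
          refine ⟨hnv, ⟨hm1, List.nodup_reverse.mpr hnw, ?_⟩, ?_⟩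
          · intro x hx y hy hxy
            rw [List.mem_reverse] at hy
            have := hm2 x hx
            have := hbw y hy
            omega
          · intro x hx y hy hxy
            rw [List.mem_append] at hy
            have h3 := hbv x hx
            rcases hy with hy | hy
            · have := hm2 y hy; omega
            · rw [List.mem_reverse] at hy
              exact hdisj x hx y hy hxy
        · intro x hx
          rw [Walk.edges_append, Walk.edges_append, List.map_append, List.map_append,
            Walk.edges_reverse, List.map_reverse, List.mem_append, List.mem_append,
            List.mem_reverse] at hx
          rcases hx with hx | hx | hx
          · have := hbv x hx; omega
          · have := hm2 x hx; omega
          · have := hbw x hx; omega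


lemma col_lt {r : ℕ} (hconn : G.Connected) (hecc : ∀ u, G.dist z u ≤ r) :
    ∀ e ∈ G.edgeSet, col G z e < 3 * r := by
  intro e
  induction e using Sym2.ind with
  | _ u v =>
    intro he
    rw [SimpleGraph.mem_edgeSet] at he
    have hzu : G.dist z u ≤ r := hecc u
    have hzv : G.dist z v ≤ r := hecc v
    have hpos : 1 ≤ G.dist z u ∨ 1 ≤ G.dist z v := by
      by_contra hc
      push_neg at hc
      have h1 : z = u := (hconn.dist_eq_zero_iff).mp (by omega)
      have h2 : z = v := (hconn.dist_eq_zero_iff).mp (by omega)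
      exact he.ne (h1 ▸ h2)
    rcases lt_trichotomy (G.dist z u) (G.dist z v) with h | h | h
    · rw [col_mk, if_neg (by omega), if_pos h]
      have := crossCol_bound (G := G) (z := z) (v := v) (a := u)
      omega
    · rw [col_same h]
      omega
    · rw [col_mk, if_neg (by omega), if_neg (by omega)]
      have := crossCol_bound (G := G) (z := z) (v := u) (a := v)
      omega

lemma exists_center [Fintype V] (hG : G.Connected) {r : ℕ}
    (hr : (⨅ v : V, ⨆ u : V, G.edist v u).toNat = r) :
    ∃ z : V, ∀ u, G.dist z u ≤ r := by
  have : Nonempty V := hG.nonempty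
  obtain ⟨z, hz⟩ := Finite.exists_min (fun v : V => ⨆ u : V, G.edist v u)
  have hrad : (⨅ v : V, ⨆ u : V, G.edist v u) = ⨆ u : V, G.edist z u :=
    le_antisymm (iInf_le _ z) (le_iInf hz)
  have hfin : (⨆ u : V, G.edist z u) ≠ ⊤ := by
    have hb : ∀ u, G.edist z u ≤ (Fintype.card V : ℕ∞) := by
      intro u
      obtain ⟨p, hp1, hp2⟩ := hG.exists_path_of_dist z u
      have h1 : G.edist z u ≤ (p.length : ℕ∞) := sInf_le ⟨p, rfl⟩
      exact h1.trans (by exact_mod_cast Nat.le_of_lt hp1.length_lt)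
    have := iSup_le hb
    exact ne_top_of_le_ne_top (by simp) this
  refine ⟨z, fun u => ?_⟩
  have h1 : G.edist z u ≤ ⨆ u : V, G.edist z u := le_iSup _ u
  have h2 := ENat.toNat_le_toNat h1 hfin
  rw [hrad] at hr
  rw [SimpleGraph.dist]
  omega


end Part3

end RCAux

/-- Every finite bridgeless connected chordal graph (no induced cycle of
length greater than `3`) with radius `r` satisfies `rc G ≤ 3 r`. -/
theorem rc_le_three_radius_of_chordal {V : Type*} [Fintype V]
    (G : SimpleGraph V) (hG : G.Connected) (hbl : Bridgeless G)
    (hchordal : ∀ (v : V) (p : G.Walk v v), IsInducedCycle G p → p.length ≤ 3)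
    (r : ℕ) (hr : _root_.radius G = r) :
    rc G ≤ 3 * r := by
  classical
  obtain ⟨z, hecc⟩ := RCAux.exists_center (G := G) hG (by rw [← hr]; rfl : (⨅ v : V, ⨆ u : V, G.edist v u).toNat = r)
  have htri : ∀ {x a : V}, G.Adj x a → ∃ t, G.Adj x t ∧ G.Adj a t :=
    fun h => RCAux.adj_triangle hbl hchordal h
  have hmem : 3 * r ∈
      {n | ∃ c : Sym2 V → ℕ, (∀ e ∈ G.edgeSet, c e < n) ∧ RainbowConnected G c} := by
    refine ⟨RCAux.col G z, RCAux.col_lt (z := z) hG hecc, ?_⟩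
    intro u v
    obtain ⟨W, hn, -⟩ := RCAux.descent (z := z) hG (fun {x a} h => htri h) r u v (hecc u) (hecc v)
    exact RCAux.exists_rainbow_path _ W hn
  exact Nat.sInf_le hmem
end

section
/- Let G be a finite bridgeless (2-edge-connected) connected graph with at least one edge and diameter d. Then G contains an isometric cycle, and the size iso(G) of a largest isometric cycle of G satisfies 3 ≤ iso(G) ≤ 2d + 1. -/
open SimpleGraph

variable {V : Type*}

namespace IsoAux

open SimpleGraph Walk

variable {V : Type*} {G : SimpleGraph V}

lemma support_getElem {u v : V} (w : G.Walk u v) (i : ℕ) (hi : i < w.support.length) :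
    w.support[i] = w.getVert i := by
  induction w generalizing i with
  | nil =>
    simp only [Walk.support_nil, List.length_singleton] at hi
    interval_cases i
    simp [Walk.getVert_zero]
  | cons h q ih =>
    rcases i with _ | i
    · simp [Walk.support_cons, Walk.getVert_zero]
    · simp only [Walk.support_cons, List.getElem_cons_succ, Walk.getVert_cons_succ]
      exact ih i (by simp only [Walk.support_cons, List.length_cons] at hi; omega)

lemma edge_index {u v a b : V} (w : G.Walk u v) (h : s(a, b) ∈ w.edges) :
    ∃ i < w.length, (w.getVert i = a ∧ w.getVert (i + 1) = b) ∨
      (w.getVert i = b ∧ w.getVert (i + 1) = a) := by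
  induction w with
  | nil => simp at h
  | @cons x y z hadj q ih =>
    rw [Walk.edges_cons, List.mem_cons] at h
    rcases h with h | h
    · refine ⟨0, by simp [Walk.length_cons], ?_⟩
      rw [Sym2.eq_iff] at h
      rcases h with ⟨rfl, rfl⟩ | ⟨rfl, rfl⟩
      · exact Or.inl ⟨Walk.getVert_zero _, by rw [Walk.getVert_cons_succ, Walk.getVert_zero]⟩
      · exact Or.inr ⟨Walk.getVert_zero _, by rw [Walk.getVert_cons_succ, Walk.getVert_zero]⟩
    · obtain ⟨i, hi, hor⟩ := ih h
      refine ⟨i + 1, by simp only [Walk.length_cons]; omega, ?_⟩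
      simpa [Walk.getVert_cons_succ] using hor

lemma split_at_edge [DecidableEq V] {u v : V} (w : G.Walk u v) (e : Sym2 V)
    (h1 : w.edges.count e = 1) :
    ∃ (c d : V) (_ : G.Adj c d) (w1 : G.Walk u c) (w2 : G.Walk d v),
      s(c, d) = e ∧ e ∉ w1.edges ∧ e ∉ w2.edges ∧ w1.length + w2.length + 1 = w.length := by
  induction w with
  | nil => simp at h1
  | @cons x y z hadj q ih =>
    rw [Walk.edges_cons, List.count_cons] at h1
    by_cases he : s(x, y) = e
    · have hq0 : q.edges.count e = 0 := by simp [he] at h1; omega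
      refine ⟨x, y, hadj, Walk.nil, q, he, by simp, ?_, by simp [Walk.length_cons]⟩
      exact List.count_eq_zero.mp hq0
    · have hq1 : q.edges.count e = 1 := by simp [he] at h1; omega
      obtain ⟨c, d, hcd, w1, w2, h_eq, h_1, h_2, hlen⟩ := ih hq1
      refine ⟨c, d, hcd, Walk.cons hadj w1, w2, h_eq, ?_, h_2, ?_⟩
      · rw [Walk.edges_cons, List.mem_cons]
        rintro (h | h)
        · exact he h.symm
        · exact h_1 h
      · simp only [Walk.length_cons]; omega

lemma cycle_of_unique_edge [DecidableEq V] {x : V} (w : G.Walk x x) (e : Sym2 V)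
    (h1 : w.edges.count e = 1) :
    ∃ (y : V) (c : G.Walk y y), c.IsCycle ∧ c.length ≤ w.length := by
  obtain ⟨c, d, hcd, w1, w2, hce, he1, he2, hlen⟩ := split_at_edge w e h1
  set q : G.Walk d c := w2.append w1 with hq
  have hqe : e ∉ q.edges := by
    rw [hq, Walk.edges_append, List.mem_append]
    rintro (h | h)
    · exact he2 h
    · exact he1 h
  have hpe : e ∉ q.bypass.edges := fun h => hqe (q.edges_bypass_subset h)
  refine ⟨c, Walk.cons hcd q.bypass, ?_, ?_⟩
  · rw [Walk.cons_isCycle_iff]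
    exact ⟨q.bypass_isPath, by rwa [hce]⟩
  · have h1 := q.length_bypass_le
    have h2 : q.length = w2.length + w1.length := Walk.length_append _ _
    simp only [Walk.length_cons]
    omega

lemma phi_drift {n : ℕ} {H : SimpleGraph V} {φ : V → ZMod n}
    (hstep : ∀ a b, H.Adj a b → φ b = φ a + 1 ∨ φ b = φ a - 1)
    {a b : V} (w : H.Walk a b) :
    ∃ s : ℤ, s.natAbs ≤ w.length ∧ φ b = φ a + (s : ZMod n) := by
  induction w with
  | nil => exact ⟨0, by simp, by simp⟩
  | @cons x y z hadj q ih =>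
    obtain ⟨s, hs, hφ⟩ := ih
    rcases hstep x y hadj with h | h
    · refine ⟨s + 1, ?_, ?_⟩
      · simp only [Walk.length_cons]; omega
      · rw [hφ, h]; push_cast; ring
    · refine ⟨s - 1, ?_, ?_⟩
      · simp only [Walk.length_cons]; omega
      · rw [hφ, h]; push_cast; ring

lemma mem_support_tail_of_closed {u y : V} (w : G.Walk u u) (hlen : 1 ≤ w.length)
    (hy : y ∈ w.support) : y ∈ w.support.tail := by
  have htl : w.support.tail.length = w.length := by
    simp [List.length_tail, Walk.length_support]
  have key : ∀ j, 1 ≤ j → j ≤ w.length → w.getVert j = y → y ∈ w.support.tail := by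
    intro j hj1 hjl hjy
    have hgv : w.support.tail[j - 1]'(by omega) = y := by
      rw [List.getElem_tail, support_getElem]
      rw [show j - 1 + 1 = j by omega]
      exact hjy
    exact hgv ▸ List.getElem_mem _
  obtain ⟨i, hiv, hil⟩ := Walk.mem_support_iff_exists_getVert.mp hy
  rcases Nat.eq_zero_or_pos i with h | h
  · refine key w.length hlen le_rfl ?_
    rw [Walk.getVert_length]
    rw [h, Walk.getVert_zero] at hiv
    exact hiv
  · exact key i h hil hiv

lemma girth_cycle_isometric (hG : G.Connected) {v : V} (C : G.Walk v v)
    (hC : C.IsCycle) (hg : G.egirth = C.length) :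
    IsIsometricCycle G C := by
  classical
  refine ⟨hC, fun x hx y hy => ?_⟩
  set H := SimpleGraph.fromEdgeSet {e | e ∈ C.edges} with hH
  have hHle : H ≤ G := by
    intro a b hab
    rw [hH, fromEdgeSet_adj] at hab
    exact (G.mem_edgeSet).mp (C.edges_subset_edgeSet hab.1)
  have hmemH : ∀ e ∈ C.edges, e ∈ H.edgeSet := by
    intro e he
    rw [hH, edgeSet_fromEdgeSet]
    exact ⟨he, G.not_isDiag_of_mem_edgeSet (C.edges_subset_edgeSet he)⟩
  have hg3 : 3 ≤ C.length := hC.three_le_length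
  set C' := C.rotate x hx with hC'def
  have hC' : C'.IsCycle := hC.rotate hx
  have hrot := C.rotate_edges x hx
  have hedges : ∀ e, e ∈ C'.edges ↔ e ∈ C.edges := fun e => hrot.mem_iff
  have hlenC' : C'.length = C.length := by
    rw [← Walk.length_edges, ← Walk.length_edges]
    exact hrot.perm.length_eq
  have hy' : y ∈ C'.support := by
    have h1 : y ∈ C.support.tail := mem_support_tail_of_closed C (by omega) hy
    exact List.mem_of_mem_tail ((C.support_rotate x hx).mem_iff.mpr h1)
  set A1 := C'.takeUntil y hy' with hA1def
  set A2 := C'.dropUntil y hy' with hA2def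
  have hspec : A1.append A2 = C' := C'.take_spec hy'
  have hsum : A1.length + A2.length = C.length := by
    rw [← hlenC', ← hspec, Walk.length_append]
  have hnodups : A1.edges.Nodup ∧ A2.edges.Nodup := by
    have h := hC'.isTrail.edges_nodup
    rw [← hspec, Walk.edges_append, List.nodup_append] at h
    exact ⟨h.1, h.2.1⟩
  have hsubA1 : ∀ e ∈ A1.edges, e ∈ C.edges :=
    fun e he => (hedges e).mp (C'.edges_takeUntil_subset hy' he)
  have hsubA2 : ∀ e ∈ A2.edges, e ∈ C.edges :=
    fun e he => (hedges e).mp (C'.edges_dropUntil_subset hy' he)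
  let B1 : H.Walk x y := A1.transfer H (fun e he => hmemH e (hsubA1 e he))
  let B2 : H.Walk y x := A2.transfer H (fun e he => hmemH e (hsubA2 e he))
  have hreach : H.Reachable x y := ⟨B1⟩
  have hd1 : H.dist x y ≤ A1.length := by
    have := SimpleGraph.dist_le B1
    rwa [Walk.length_transfer] at this
  have hd2 : H.dist x y ≤ A2.length := by
    have := SimpleGraph.dist_le B2
    rw [Walk.length_transfer] at this
    rwa [SimpleGraph.dist_comm] at this
  have le1 : G.dist x y ≤ H.dist x y := by
    obtain ⟨w, hw⟩ := hreach.exists_walk_length_eq_dist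
    calc G.dist x y ≤ (w.mapLe hHle).length := SimpleGraph.dist_le _
    _ = w.length := by simp [Walk.mapLe]
    _ = H.dist x y := hw
  refine le_antisymm ?_ le1
  by_contra hlt
  push_neg at hlt
  obtain ⟨P, hP⟩ := hG.exists_walk_length_eq_dist x y
  have key : ∀ (A : G.Walk y x), A.edges.Nodup →
      G.dist x y < A.length → G.dist x y + A.length < C.length → False := by
    intro A hnd hlA hltg
    have hex : ∃ e ∈ A.edges, e ∉ P.edges := by
      by_contra hco
      push_neg at hco
      have h1 : A.edges.toFinset ⊆ P.edges.toFinset := by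
        intro e he
        rw [List.mem_toFinset] at he ⊢
        exact hco e he
      have h2 : A.edges.toFinset.card = A.length := by
        rw [List.toFinset_card_of_nodup hnd, Walk.length_edges]
      have h3 : P.edges.toFinset.card ≤ P.edges.length := List.toFinset_card_le _
      have h4 := Finset.card_le_card h1
      rw [h2] at h4
      rw [Walk.length_edges, hP] at h3
      omega
    obtain ⟨e, heA, heP⟩ := hex
    set W : G.Walk x x := P.append A with hW
    have hcnt : W.edges.count e = 1 := by
      rw [hW, Walk.edges_append, List.count_append, List.count_eq_zero.mpr heP,
        List.count_eq_one_of_mem hnd heA]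
    obtain ⟨z, c, hc, hclen⟩ := cycle_of_unique_edge W e hcnt
    have hgir := (le_egirth.mp le_rfl) z c hc
    rw [hg] at hgir
    have hgle : C.length ≤ c.length := by exact_mod_cast hgir
    have hwlen : W.length = P.length + A.length := Walk.length_append _ _
    omega
  exact key A2 hnodups.2 (lt_of_lt_of_le hlt hd2)
    (by have := lt_of_lt_of_le hlt hd1; omega)

lemma isometric_cycle_length_le [Fintype V] (hG : G.Connected)
    {v : V} {p : G.Walk v v} (hp : IsIsometricCycle G p) {d : ℕ} (hd : G.diam = d) :
    p.length ≤ 2 * d + 1 := by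
  classical
  by_contra hcon
  push_neg at hcon
  set n := p.length with hn
  have hn3 : 3 ≤ n := hp.1.three_le_length
  haveI : NeZero n := ⟨by omega⟩
  have htail : p.support.tail.Nodup := ((Walk.isCycle_def _).mp hp.1).2.2
  have htlen : p.support.tail.length = n := by
    simp [List.length_tail, Walk.length_support, hn]
  set φ : V → ZMod n := fun z => ((p.support.tail.idxOf z + 1 : ℕ) : ZMod n) with hφdef
  have hidx : ∀ j, 1 ≤ j → j ≤ n → φ (p.getVert j) = (j : ZMod n) := by
    intro j hj1 hjn
    have hval : p.support.tail[j - 1]'(by omega) = p.getVert j := by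
      rw [List.getElem_tail, support_getElem]
      rw [show j - 1 + 1 = j by omega]
    have hio : p.support.tail.idxOf (p.getVert j) = j - 1 := by
      conv_lhs => rw [← hval]
      exact htail.idxOf_getElem _ _
    rw [hφdef]
    simp only
    rw [hio, show j - 1 + 1 = j by omega]
  have hφ : ∀ i ≤ n, φ (p.getVert i) = (i : ZMod n) := by
    intro i hi
    rcases Nat.eq_zero_or_pos i with h0 | h0
    · subst h0
      have h1 : p.getVert 0 = p.getVert n := by rw [Walk.getVert_zero, Walk.getVert_length]
      rw [h1, hidx n (by omega) le_rfl]
      simp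
    · exact hidx i h0 hi
  set H := SimpleGraph.fromEdgeSet {e | e ∈ p.edges} with hH
  have hstep : ∀ a b, H.Adj a b → φ b = φ a + 1 ∨ φ b = φ a - 1 := by
    intro a b hab
    rw [hH, fromEdgeSet_adj] at hab
    obtain ⟨i, hi, hor⟩ := edge_index p hab.1
    rcases hor with ⟨ha, hb⟩ | ⟨ha, hb⟩
    · left
      rw [← ha, ← hb, hφ i (by omega), hφ (i + 1) (by omega)]
      push_cast
      ring
    · right
      rw [← ha, ← hb, hφ i (by omega), hφ (i + 1) (by omega)]
      push_cast
      ring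
  set y := p.getVert (d + 1) with hy
  have hysup : y ∈ p.support := Walk.mem_support_iff_exists_getVert.mpr ⟨d + 1, rfl, by omega⟩
  have hφv : φ v = 0 := by
    have h := hφ 0 (by omega)
    rwa [Walk.getVert_zero, Nat.cast_zero] at h
  have hφy : φ y = ((d + 1 : ℕ) : ZMod n) := hφ (d + 1) (by omega)
  have hvy : v ≠ y := by
    intro h
    rw [← h, hφv] at hφy
    have hdvd : n ∣ d + 1 := (ZMod.natCast_eq_zero_iff _ _).mp hφy.symm
    have := Nat.le_of_dvd (by omega) hdvd
    omega
  have hdisteq : H.dist v y = G.dist v y := hp.2 v p.start_mem_support y hysup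
  have hediam : G.ediam ≠ ⊤ := by
    haveI : Nonempty V := ⟨v⟩
    obtain ⟨a, b, hab⟩ := G.exists_edist_eq_ediam_of_finite
    rw [← hab]
    exact (edist_ne_top_iff_reachable).mpr (hG a b)
  have hGd : G.dist v y ≤ d := by
    have h := G.dist_le_diam hediam (u := v) (v := y)
    rwa [hd] at h
  have hGpos : 0 < G.dist v y := hG.pos_dist_of_ne hvy
  have hHne : H.dist v y ≠ 0 := by omega
  obtain ⟨w, hwl⟩ := SimpleGraph.exists_walk_of_dist_ne_zero hHne
  obtain ⟨s, hs, hφs⟩ := phi_drift hstep w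
  rw [hφv, hφy, zero_add] at hφs
  have hz : (((d : ℤ) + 1 - s : ℤ) : ZMod n) = 0 := by
    push_cast at hφs ⊢
    rw [← hφs]
    ring
  have hdvd : (n : ℤ) ∣ ((d : ℤ) + 1 - s) := (ZMod.intCast_zmod_eq_zero_iff_dvd _ _).mp hz
  have hslen : s.natAbs ≤ d := by omega
  have hble : (n : ℤ) ≤ (d : ℤ) + 1 - s := Int.le_of_dvd (by omega) hdvd
  omega

end IsoAux

/-- Every finite bridgeless connected graph `G` with at least one edge
and diameter `d` contains an isometric cycle, and `3 ≤ isoNum G ≤ 2d + 1`. -/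
theorem isoNum_bounds {V : Type*} [Fintype V]
    (G : SimpleGraph V) (hG : G.Connected) (hbl : Bridgeless G)
    (hne : G.edgeSet.Nonempty) (d : ℕ) (hd : G.diam = d) :
    (∃ (v : V) (p : G.Walk v v), IsIsometricCycle G p) ∧
      3 ≤ isoNum G ∧ isoNum G ≤ 2 * d + 1 := by
  classical
  obtain ⟨e, he⟩ := hne
  have hnac : ¬ G.IsAcyclic := by
    intro hac
    exact hbl e he (isAcyclic_iff_forall_edge_isBridge.mp hac he)
  obtain ⟨v, C, hC, hg⟩ := exists_egirth_eq_length.mpr hnac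
  have hiso : IsIsometricCycle G C := IsoAux.girth_cycle_isometric hG C hC hg
  have hmem : C.length ∈ {n | ∃ (v : V) (p : G.Walk v v), IsIsometricCycle G p ∧ p.length = n} :=
    ⟨v, C, hiso, rfl⟩
  have hbdd : BddAbove {n | ∃ (v : V) (p : G.Walk v v), IsIsometricCycle G p ∧ p.length = n} := by
    refine ⟨Fintype.card V, fun n hn => ?_⟩
    obtain ⟨u, q, hq, rfl⟩ := hn
    have h1 : q.support.tail.Nodup := ((Walk.isCycle_def _).mp hq.1).2.2
    have h2 := h1.length_le_card
    simpa [List.length_tail, Walk.length_support] using h2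
  refine ⟨⟨v, C, hiso⟩, ?_, ?_⟩
  · exact le_trans hC.three_le_length (le_csSup hbdd hmem)
  · refine csSup_le ⟨_, hmem⟩ (fun n hn => ?_)
    obtain ⟨u, q, hq, rfl⟩ := hn
    exact IsoAux.isometric_cycle_length_le hG hq hd
end
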